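/- Let m, s be positive integers such that gcd(s + m, 3m) = 1. For every η ∈ F_{2^{3m}} with η ≠ 1, there exist unique nonzero elements x₀, y₀ ∈ F_{2^{3m}} such that x₀^{2^s} = y₀ and x₀^{2^{s+m}} + x₀ = η · y₀^{2^m}. -/

import Mathlib

lemma stmt6_cop_aux {a b : ℕ} (h : Nat.gcd a b = 1) :
    Nat.Coprime (2 ^ a - 1) (2 ^ b - 1) := by
  by_contra hcon
  set g := Nat.gcd (2 ^ a - 1) (2 ^ b - 1) with hg
  have hg1 : g ≠ 1 := hcon
  set p := g.minFac with hp
  have hg0 : g ≠ 0 := by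
    intro h0
    have ha := Nat.eq_zero_of_gcd_eq_zero_left (hg ▸ h0)
    have hb := Nat.eq_zero_of_gcd_eq_zero_right (hg ▸ h0)
    have ha' : a = 0 := by
      by_contra ha0
      have : 2 ≤ 2 ^ a := Nat.one_lt_two_pow ha0
      omega
    have hb' : b = 0 := by
      by_contra hb0
      have : 2 ≤ 2 ^ b := Nat.one_lt_two_pow hb0
      omega
    rw [ha', hb'] at h; simp at h
  have hpp : p.Prime := Nat.minFac_prime hg1
  have hpa : p ∣ 2 ^ a - 1 := (Nat.minFac_dvd g).trans (Nat.gcd_dvd_left _ _)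
  have hpb : p ∣ 2 ^ b - 1 := (Nat.minFac_dvd g).trans (Nat.gcd_dvd_right _ _)
  haveI : Fact p.Prime := ⟨hpp⟩
  have h1a : (1 : ℕ) ≤ 2 ^ a := Nat.one_le_two_pow
  have h1b : (1 : ℕ) ≤ 2 ^ b := Nat.one_le_two_pow
  have ma : (1 : ℕ) ≡ 2 ^ a [MOD p] := (Nat.modEq_iff_dvd' h1a).mpr hpa
  have mb : (1 : ℕ) ≡ 2 ^ b [MOD p] := (Nat.modEq_iff_dvd' h1b).mpr hpb
  have za : ((2 : ZMod p)) ^ a = 1 := by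
    have := (ZMod.natCast_eq_natCast_iff _ _ _).mpr ma
    push_cast at this
    exact this.symm
  have zb : ((2 : ZMod p)) ^ b = 1 := by
    have := (ZMod.natCast_eq_natCast_iff _ _ _).mpr mb
    push_cast at this
    exact this.symm
  have h21 : (2 : ZMod p) ^ Nat.gcd a b = 1 := pow_gcd_eq_one.mpr ⟨za, zb⟩
  rw [h, pow_one] at h21
  have h21' : ((2 : ℕ) : ZMod p) = ((1 : ℕ) : ZMod p) := by push_cast; exact h21
  have hmod := (ZMod.natCast_eq_natCast_iff _ _ _).mp h21'
  have : p ∣ 2 - 1 := (Nat.modEq_iff_dvd' (by norm_num)).mp hmod.symm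
  simp at this
  exact hpp.one_lt.ne' this

/-- Let `gcd(s+m, 3m) = 1`. For every `η ∈ F_{2^{3m}}` with `η ≠ 1`
there exists a unique pair of nonzero elements `(x₀, y₀)` of `F_{2^{3m}}` with
`x₀^{2^s} = y₀` and `x₀^{2^{s+m}} + x₀ = η · y₀^{2^m}`. -/
theorem stmt6 {K : Type*} [Field K] [Fintype K] (m s : ℕ) (hm : 0 < m) (hs : 0 < s)
    (hgcd : Nat.gcd (s + m) (3 * m) = 1) (hK : Fintype.card K = 2 ^ (3 * m))
    (η : K) (hη : η ≠ 1) :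
    ∃! p : K × K, p.1 ≠ 0 ∧ p.2 ≠ 0 ∧ p.1 ^ 2 ^ s = p.2 ∧
      p.1 ^ 2 ^ (s + m) + p.1 = η * p.2 ^ 2 ^ m := by
  classical
  -- characteristic 2
  haveI : CharP K (ringChar K) := ringChar.charP K
  obtain ⟨nn, hprime, hcard⟩ := FiniteField.card K (ringChar K)
  have hchar2 : ringChar K = 2 := by
    have hdvd : ringChar K ∣ 2 ^ (3 * m) := by
      rw [← hK, hcard]
      exact dvd_pow_self _ (by positivity)
    exact (Nat.prime_dvd_prime_iff_eq hprime Nat.prime_two).mp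
      (hprime.dvd_of_dvd_pow hdvd)
  haveI : CharP K 2 := hchar2 ▸ ringChar.charP K
  have hch : (2 : K) = 0 := by exact_mod_cast CharP.cast_eq_zero K 2
  have hsum : η + 1 ≠ 0 := by
    intro h
    apply hη
    linear_combination h - hch
  set c : K := (η + 1)⁻¹ with hc
  have hc0 : c ≠ 0 := inv_ne_zero hsum
  set n : ℕ := 2 ^ (s + m) - 1 with hn
  have hcardU : Nat.card Kˣ = 2 ^ (3 * m) - 1 := by
    rw [Nat.card_eq_fintype_card, Fintype.card_units, hK]
  have hcop : (Nat.card Kˣ).Coprime n := by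
    rw [hcardU]
    exact (stmt6_cop_aux hgcd).symm
  have h2sm : 1 ≤ 2 ^ (s + m) := Nat.one_le_two_pow
  -- key algebraic equivalence
  have key : ∀ x : K, x ≠ 0 →
      (x ^ 2 ^ (s + m) + x = η * (x ^ 2 ^ s) ^ 2 ^ m ↔ x ^ n = c) := by
    intro x hx
    have hcollapse : (x ^ 2 ^ s) ^ 2 ^ m = x ^ 2 ^ (s + m) := by
      rw [← pow_mul, ← pow_add]
    have hpow : x ^ 2 ^ (s + m) = x * x ^ n := by
      rw [← pow_succ', hn]
      congr 1
      omega
    rw [hcollapse, hpow]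
    constructor
    · intro h
      have hmul : ((η + 1) * x ^ n) * x = 1 * x := by linear_combination -h + (x * x ^ n) * hch
      have h1 : (η + 1) * x ^ n = 1 := mul_right_cancel₀ hx hmul
      exact (inv_eq_of_mul_eq_one_right h1).symm
    · intro h
      rw [h, hc]
      field_simp
      linear_combination hch
  -- unique solution of x ^ n = c among nonzero x
  set cU : Kˣ := Units.mk0 c hc0 with hcU
  set xU : Kˣ := (powCoprime hcop).symm cU with hxU
  have hxUn : (xU : K) ^ n = c := by
    have := (powCoprime hcop).apply_symm_apply cU
    rw [powCoprime_apply] at this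
    calc (xU : K) ^ n = ((xU ^ n : Kˣ) : K) := by push_cast; ring
      _ = c := by rw [hxU, this, hcU]; rfl
  refine ⟨⟨(xU : K), (xU : K) ^ 2 ^ s⟩, ⟨xU.ne_zero, pow_ne_zero _ xU.ne_zero, rfl, ?_⟩, ?_⟩
  · exact (key _ xU.ne_zero).mpr hxUn
  · rintro ⟨x, y⟩ ⟨hx, hy, hxy, heq⟩
    simp only at hx hy hxy heq ⊢
    subst hxy
    have hxn : x ^ n = c := (key _ hx).mp heq
    have : Units.mk0 x hx = xU := by
      apply (powCoprime hcop).injective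
      rw [powCoprime_apply, powCoprime_apply]
      ext
      push_cast
      simp only [Units.val_mk0]
      rw [hxn, hxUn]
    have hxx : x = (xU : K) := by
      have := congrArg (Units.val) this
      simpa using this
    rw [hxx]
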